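/- (Closure under conditioning.) Let P be a finite probability space on an alphabet Ω, and let B ⊆ Ω be an event with P(B) > 0. For every Martin-Löf P-random infinite sequence α over Ω, the infinite sequence α|B over B obtained from α by eliminating all elements of Ω∖B occurring in α (which is well-defined since α contains infinitely many elements of B) is Martin-Löf P_B-random, where P_B is the finite probability space on B defined by P_B(a) = P(a)/P(B) for every a ∈ B. -/

import Mathlib

set_option linter.unusedSectionVars false
set_option maxHeartbeats 1000000


open scoped BigOperators

namespace Paper

/-- The measure `λ_P([S])` of the open set generated by a set `S` of strings over `Ω`:
the supremum over `n` of the `P`-weight of all length-`n` strings extending some string in `S`. -/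
noncomputable def cylMeasure {Ω : Type*} [Fintype Ω] (P : Ω → ℝ) (S : Set (List Ω)) : ℝ :=
  ⨆ n : ℕ, ∑ τ : Fin n → Ω,
    Set.indicator {τ : Fin n → Ω | ∃ σ ∈ S, σ <+: List.ofFn τ} (fun τ => ∏ i, P (τ i)) τ

/-- The prefix of length `n` of the infinite sequence `α`. -/
def seqPrefix {Ω : Type*} (α : ℕ → Ω) (n : ℕ) : List Ω := List.ofFn fun i : Fin n => α i

/-- `α` belongs to the open set `[S]` generated by the set of strings `S`. -/
def inOpen {Ω : Type*} (S : Set (List Ω)) (α : ℕ → Ω) : Prop :=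
  ∃ σ ∈ S, seqPrefix α σ.length = σ

/-- `P` is a finite probability space on the alphabet `Ω`. -/
def IsFPS {Ω : Type*} [Fintype Ω] (P : Ω → ℝ) : Prop :=
  (∀ a, 0 ≤ P a) ∧ ∑ a, P a = 1

/-- `C ⊆ ℕ × Ω*` is recursively enumerable (under a canonical encoding of the
finite alphabet `Ω` by an initial segment of `ℕ`). -/
def REset {Ω : Type*} [Fintype Ω] (C : Set (ℕ × List Ω)) : Prop :=
  ∃ e : Ω ≃ Fin (Fintype.card Ω),
    REPred fun p : ℕ × List (Fin (Fintype.card Ω)) => (p.1, p.2.map e.symm) ∈ C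

/-- A Martin-Löf `P`-test. -/
def MLTest {Ω : Type*} [Fintype Ω] (P : Ω → ℝ) (C : Set (ℕ × List Ω)) : Prop :=
  REset C ∧ ∀ n : ℕ, 0 < n → cylMeasure P {σ | (n, σ) ∈ C} < (2 : ℝ)⁻¹ ^ n

/-- `α` is Martin-Löf `P`-random. -/
def MLRandom {Ω : Type*} [Fintype Ω] (P : Ω → ℝ) (α : ℕ → Ω) : Prop :=
  ∀ C : Set (ℕ × List Ω), MLTest P C → ∃ n : ℕ, 0 < n ∧ ¬ inOpen {σ | (n, σ) ∈ C} α
/-- The conditional sequence `α|B`: the sequence over `B` of the values of `α` at the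
positions where `α` takes a value in `B` (in increasing order of positions). When
`{n | α n ∈ B}` is infinite this is exactly the sequence obtained from `α` by eliminating
all elements of `Ω ∖ B`. -/
noncomputable def condSeq {Ω : Type*} [DecidableEq Ω] (α : ℕ → Ω) (B : Finset Ω) (hB : B.Nonempty) :
    ℕ → {x : Ω // x ∈ B} :=
  fun k =>
    if h : α (Nat.nth (fun m => α m ∈ B) k) ∈ B then ⟨_, h⟩
    else ⟨hB.choose, hB.choose_spec⟩

section Wt
variable {Ω : Type*} [Fintype Ω] (P : Ω → ℝ)

noncomputable def wt (m : ℕ) (E : Set (List Ω)) : ℝ :=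
  ∑ τ : Fin m → Ω, Set.indicator {τ | List.ofFn τ ∈ E} (fun τ => ∏ i, P (τ i)) τ

lemma cylMeasure_eq (S : Set (List Ω)) :
    cylMeasure P S = ⨆ m : ℕ, wt P m {l | ∃ σ ∈ S, σ <+: l} := rfl

open Classical in
lemma wt_zero (E : Set (List Ω)) : wt P 0 E = if ([] : List Ω) ∈ E then 1 else 0 := by
  rw [wt]
  rw [Finset.sum_eq_single (fun i : Fin 0 => (i.elim0 : Ω))]
  · rw [Set.indicator_apply]
    simp [List.ofFn_zero]
  · intro b _ hb
    exact absurd (funext fun i => i.elim0) hb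
  · intro h; exact absurd (Finset.mem_univ _) h

variable {P} (h0 : ∀ a, 0 ≤ P a) (h1 : ∑ a, P a = 1)

include h0 in
lemma wt_nonneg (m : ℕ) (E : Set (List Ω)) : 0 ≤ wt P m E := by
  refine Finset.sum_nonneg fun τ _ => ?_
  classical
  rw [Set.indicator_apply]
  split
  · exact Finset.prod_nonneg fun i _ => h0 _
  · exact le_refl 0

lemma wt_succ (m : ℕ) (E : Set (List Ω)) :
    wt P (m + 1) E = ∑ a : Ω, P a * wt P m {l | a :: l ∈ E} := by
  classical
  rw [wt, ← (Fin.consEquiv (fun _ : Fin (m+1) => Ω)).sum_comp]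
  rw [Fintype.sum_prod_type]
  refine Finset.sum_congr rfl fun a _ => ?_
  rw [wt, Finset.mul_sum]
  refine Finset.sum_congr rfl fun f _ => ?_
  have hofn : List.ofFn ((Fin.consEquiv (fun _ : Fin (m+1) => Ω)) (a, f)) = a :: List.ofFn f := by
    simp [Fin.consEquiv, List.ofFn_succ]
  have hprod : ∏ i, P (((Fin.consEquiv (fun _ : Fin (m+1) => Ω)) (a, f)) i)
      = P a * ∏ i, P (f i) := by
    rw [Fin.prod_univ_succ]
    simp [Fin.consEquiv]
  rw [Set.indicator_apply, Set.indicator_apply]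
  simp only [Set.mem_setOf_eq, hofn, hprod]
  split <;> simp

include h0 h1 in
lemma wt_le_one (m : ℕ) (E : Set (List Ω)) : wt P m E ≤ 1 := by
  induction m generalizing E with
  | zero => rw [wt_zero]; split <;> norm_num
  | succ m ih =>
      rw [wt_succ]
      calc ∑ a : Ω, P a * wt P m {l | a :: l ∈ E} ≤ ∑ a : Ω, P a * 1 := by
            refine Finset.sum_le_sum fun a _ => ?_
            exact mul_le_mul_of_nonneg_left (ih _) (h0 a)
        _ = 1 := by simp [h1]

include h0 in
lemma wt_mono (m : ℕ) {E E' : Set (List Ω)}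
    (h : ∀ l : List Ω, l.length = m → l ∈ E → l ∈ E') :
    wt P m E ≤ wt P m E' := by
  classical
  refine Finset.sum_le_sum fun τ _ => ?_
  rw [Set.indicator_apply, Set.indicator_apply]
  by_cases hτ : τ ∈ {τ : Fin m → Ω | List.ofFn τ ∈ E}
  · rw [if_pos hτ, if_pos (show τ ∈ {τ : Fin m → Ω | List.ofFn τ ∈ E'} from h _ (by simp) hτ)]
  · rw [if_neg hτ]
    split
    · exact Finset.prod_nonneg fun i _ => h0 _
    · exact le_refl 0

include h0 in
lemma wt_biUnion (m : ℕ) (R : ℕ) (E : ℕ → Set (List Ω)) :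
    wt P m {l | ∃ N ∈ Finset.range R, l ∈ E N} ≤ ∑ N ∈ Finset.range R, wt P m (E N) := by
  classical
  calc wt P m {l | ∃ N ∈ Finset.range R, l ∈ E N}
      ≤ ∑ τ : Fin m → Ω, ∑ N ∈ Finset.range R,
          Set.indicator {τ : Fin m → Ω | List.ofFn τ ∈ E N} (fun τ => ∏ i, P (τ i)) τ := ?_
    _ = ∑ N ∈ Finset.range R, wt P m (E N) := Finset.sum_comm
  rw [wt]
  refine Finset.sum_le_sum fun τ _ => ?_
  rw [Set.indicator_apply]
  split
  · rename_i hτ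
    obtain ⟨N, hNR, hN⟩ := hτ
    refine Finset.single_le_sum (f := fun N => Set.indicator {τ : Fin m → Ω | List.ofFn τ ∈ E N}
      (fun τ => ∏ i, P (τ i)) τ) (fun i _ => ?_) hNR |>.trans_eq' ?_
    · simp only [Set.indicator_apply]; split
      · exact Finset.prod_nonneg fun i _ => h0 _
      · exact le_refl 0
    · rw [Set.indicator_apply,
        if_pos (show τ ∈ {τ : Fin m → Ω | List.ofFn τ ∈ E N} from hN)]
  · exact Finset.sum_nonneg fun i _ => by
      rw [Set.indicator_apply]; split
      · exact Finset.prod_nonneg fun i _ => h0 _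
      · exact le_refl 0

include h0 h1 in
lemma wt_le_cylMeasure (m : ℕ) (S : Set (List Ω)) :
    wt P m {l | ∃ σ ∈ S, σ <+: l} ≤ cylMeasure P S := by
  rw [cylMeasure_eq]
  have hb : BddAbove (Set.range fun k => wt P k {l | ∃ σ ∈ S, σ <+: l}) :=
    ⟨1, by rintro x ⟨k, rfl⟩; exact wt_le_one h0 h1 k _⟩
  exact le_ciSup hb m

omit h0 h1 in
lemma cylMeasure_le {S : Set (List Ω)} {c : ℝ}
    (h : ∀ m, wt P m {l | ∃ σ ∈ S, σ <+: l} ≤ c) : cylMeasure P S ≤ c := by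
  rw [cylMeasure_eq]
  exact ciSup_le h

end Wt

section G
variable {Ω : Type*} [Fintype Ω] [DecidableEq Ω] (B : Finset Ω)

/-- Lists of length at least `N + M` with no element of `B` in positions `[N, N+M)`. -/
def Gset (N M : ℕ) : Set (List Ω) :=
  {l | N + M ≤ l.length ∧ ∀ x ∈ (l.drop N).take M, x ∉ B}

variable {P : Ω → ℝ} (h0 : ∀ a, 0 ≤ P a) (h1 : ∑ a, P a = 1)

lemma Gset_cons_succ (a : Ω) (N M : ℕ) :
    {l : List Ω | a :: l ∈ Gset B (N + 1) M} = Gset B N M := by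
  ext l
  simp only [Gset, Set.mem_setOf_eq, List.drop_succ_cons, List.length_cons]
  constructor
  · rintro ⟨h1, h2⟩; exact ⟨by omega, h2⟩
  · rintro ⟨h1, h2⟩; exact ⟨by omega, h2⟩

lemma Gset_cons_zero (a : Ω) (M : ℕ) :
    {l : List Ω | a :: l ∈ Gset B 0 (M + 1)} =
      if a ∈ B then (∅ : Set (List Ω)) else Gset B 0 M := by
  ext l
  simp only [Gset, Set.mem_setOf_eq, List.drop_zero, List.take_succ_cons, List.length_cons,
    List.mem_cons]
  by_cases ha : a ∈ B
  · simp only [if_pos ha, Set.mem_empty_iff_false, iff_false]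
    rintro ⟨-, h2⟩
    exact h2 a (Or.inl rfl) ha
  · simp only [if_neg ha, Set.mem_setOf_eq]
    constructor
    · rintro ⟨hl, h2⟩
      exact ⟨by omega, fun x hx => h2 x (Or.inr hx)⟩
    · rintro ⟨hl, h2⟩
      refine ⟨by omega, fun x hx => ?_⟩
      rcases hx with rfl | hx
      · exact ha
      · exact h2 x hx
end G

section Gbound
variable {Ω : Type*} [Fintype Ω] [DecidableEq Ω] {B : Finset Ω}
variable {P : Ω → ℝ} (h0 : ∀ a, 0 ≤ P a) (h1 : ∑ a, P a = 1)

include h0 h1 in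
lemma wt_Gset_le (m N M : ℕ) :
    wt P m (Gset B N M) ≤ (∑ a ∈ Bᶜ, P a) ^ M := by
  have hq0 : (0:ℝ) ≤ ∑ a ∈ Bᶜ, P a := Finset.sum_nonneg fun a _ => h0 a
  induction m generalizing N M with
  | zero =>
      rw [wt_zero]
      split
      · rename_i hmem
        have : N + M ≤ 0 := hmem.1
        have hM : M = 0 := by omega
        simp [hM]
      · positivity
  | succ m ih =>
      rw [wt_succ]
      match N, M with
      | N + 1, M =>
          calc ∑ a : Ω, P a * wt P m {l | a :: l ∈ Gset B (N+1) M}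
              ≤ ∑ a : Ω, P a * (∑ a ∈ Bᶜ, P a) ^ M := by
                refine Finset.sum_le_sum fun a _ => ?_
                rw [Gset_cons_succ]
                exact mul_le_mul_of_nonneg_left (ih N M) (h0 a)
            _ = (∑ a ∈ Bᶜ, P a) ^ M := by rw [← Finset.sum_mul, h1, one_mul]
      | 0, 0 =>
          calc ∑ a : Ω, P a * wt P m {l | a :: l ∈ Gset B 0 0}
              ≤ ∑ a : Ω, P a * 1 := by
                refine Finset.sum_le_sum fun a _ => ?_
                exact mul_le_mul_of_nonneg_left (wt_le_one h0 h1 _ _) (h0 a)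
            _ = 1 := by rw [← Finset.sum_mul, h1, one_mul]
            _ = _ := by norm_num
      | 0, M + 1 =>
          have hsplit : ∀ a : Ω, P a * wt P m {l | a :: l ∈ Gset B 0 (M+1)}
              ≤ if a ∈ B then 0 else P a * (∑ a ∈ Bᶜ, P a) ^ M := by
            intro a
            rw [Gset_cons_zero]
            by_cases ha : a ∈ B
            · rw [if_pos ha, if_pos ha]
              have : wt P m (∅ : Set (List Ω)) = 0 := by
                rw [wt]
                refine Finset.sum_eq_zero fun τ _ => ?_
                simp [Set.indicator_apply]
              rw [this, mul_zero]
            · rw [if_neg ha, if_neg ha]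
              exact mul_le_mul_of_nonneg_left (ih 0 M) (h0 a)
          calc ∑ a : Ω, P a * wt P m {l | a :: l ∈ Gset B 0 (M+1)}
              ≤ ∑ a : Ω, if a ∈ B then 0 else P a * (∑ a ∈ Bᶜ, P a) ^ M :=
                Finset.sum_le_sum fun a _ => hsplit a
            _ = ∑ a ∈ Bᶜ, P a * (∑ a ∈ Bᶜ, P a) ^ M := by
                rw [← Finset.sum_add_sum_compl B,
                  Finset.sum_eq_zero (fun a ha => by rw [if_pos ha]), zero_add]
                exact Finset.sum_congr rfl fun a ha => by
                  rw [if_neg (Finset.mem_compl.mp ha)]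
            _ = (∑ a ∈ Bᶜ, P a) ^ (M + 1) := by
                rw [← Finset.sum_mul, pow_succ, mul_comm]
end Gbound

section Cond
variable {Ω : Type*} [Fintype Ω] [DecidableEq Ω] (B : Finset Ω)

def UpClosed {γ : Type*} (E : Set (List γ)) : Prop := ∀ w ∈ E, ∀ b, w ++ [b] ∈ E

lemma upClosed_cons {γ : Type*} {E : Set (List γ)} (hE : UpClosed E) (b : γ) :
    UpClosed {w | b :: w ∈ E} := fun w hw b' => by
  have := hE (b :: w) hw b'
  simpa using this

def pushB (a : Ω) (w : List {x : Ω // x ∈ B}) : List {x : Ω // x ∈ B} :=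
  if h : a ∈ B then ⟨a, h⟩ :: w else w

def filt : List Ω → List {x : Ω // x ∈ B} :=
  fun l => l.filterMap fun a => if h : a ∈ B then some ⟨a, h⟩ else none

@[simp] lemma filt_nil : filt B [] = [] := rfl

lemma filt_cons (a : Ω) (l : List Ω) : filt B (a :: l) = pushB B a (filt B l) := by
  unfold filt pushB
  rw [List.filterMap_cons]
  by_cases h : a ∈ B
  · rw [dif_pos h, dif_pos h]
  · rw [dif_neg h, dif_neg h]

lemma filt_append (l₁ l₂ : List Ω) : filt B (l₁ ++ l₂) = filt B l₁ ++ filt B l₂ :=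
  List.filterMap_append

lemma upClosed_push {E : Set (List {x : Ω // x ∈ B})} (hE : UpClosed E) (a : Ω) :
    UpClosed {w | pushB B a w ∈ E} := by
  unfold pushB
  by_cases h : a ∈ B
  · simp only [dif_pos h]
    exact upClosed_cons hE _
  · simp only [dif_neg h]
    exact hE

lemma wt_len_mono {γ : Type*} [Fintype γ] {Q : γ → ℝ} (h0 : ∀ a, 0 ≤ Q a)
    (h1 : ∑ a, Q a = 1) (m : ℕ) (E : Set (List γ)) (hE : UpClosed E) :
    wt Q m E ≤ wt Q (m + 1) E := by
  induction m generalizing E with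
  | zero =>
      rw [wt_zero, wt_succ]
      split
      · rename_i hmem
        calc (1:ℝ) = ∑ a : γ, Q a := h1.symm
          _ ≤ ∑ a : γ, Q a * wt Q 0 {w | a :: w ∈ E} := by
            refine Finset.sum_le_sum fun a _ => ?_
            have : ([] : List γ) ∈ {w | a :: w ∈ E} := hE [] hmem a
            rw [wt_zero, if_pos this, mul_one]
      · refine Finset.sum_nonneg fun a _ => mul_nonneg (h0 a) (wt_nonneg h0 0 _)
  | succ m ih =>
      rw [wt_succ, wt_succ (P := Q) (m+1)]
      refine Finset.sum_le_sum fun a _ => ?_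
      exact mul_le_mul_of_nonneg_left (ih _ (upClosed_cons hE a)) (h0 a)

variable {P : Ω → ℝ} (h0 : ∀ a, 0 ≤ P a) (h1 : ∑ a, P a = 1) (hp : 0 < ∑ a ∈ B, P a)

include h0 hp in
lemma PB_fps : (∀ b : {x : Ω // x ∈ B}, 0 ≤ P ↑b / ∑ a ∈ B, P a) ∧
    ∑ b : {x : Ω // x ∈ B}, P ↑b / ∑ a ∈ B, P a = 1 := by
  constructor
  · intro b; exact div_nonneg (h0 _) hp.le
  · rw [← Finset.sum_div]
    rw [Finset.sum_coe_sort B (fun a => P a)]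
    exact div_self hp.ne'

include h0 h1 hp in
lemma wt_filt_le (m : ℕ) (E : Set (List {x : Ω // x ∈ B})) (hE : UpClosed E) :
    wt P m {l | filt B l ∈ E} ≤ wt (fun b : {x : Ω // x ∈ B} => P ↑b / ∑ a ∈ B, P a) m E := by
  set p : ℝ := ∑ a ∈ B, P a with hpdef
  set PB : {x : Ω // x ∈ B} → ℝ := fun b => P ↑b / p with hPBdef
  obtain ⟨hPB0, hPB1⟩ := PB_fps (B := B) h0 hp
  classical
  induction m generalizing E with
  | zero =>
      rw [wt_zero, wt_zero]
      have h : (([] : List Ω) ∈ {l | filt B l ∈ E}) ↔ (([] : List {x : Ω // x ∈ B}) ∈ E) :=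
        Iff.rfl
      exact le_of_eq (if_congr h rfl rfl)
  | succ m ih =>
      rw [wt_succ]
      have hset : ∀ a : Ω, {l : List Ω | a :: l ∈ {l | filt B l ∈ E}}
          = {l | filt B l ∈ {w | pushB B a w ∈ E}} := by
        intro a; ext l; simp [filt_cons]
      calc ∑ a : Ω, P a * wt P m {l | a :: l ∈ {l | filt B l ∈ E}}
          ≤ ∑ a : Ω, P a * wt PB m {w | pushB B a w ∈ E} := by
            refine Finset.sum_le_sum fun a _ => ?_
            rw [hset a]
            exact mul_le_mul_of_nonneg_left (ih _ (upClosed_push B hE a)) (h0 a)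
        _ = (∑ a ∈ B, P a * wt PB m {w | pushB B a w ∈ E})
            + ∑ a ∈ Bᶜ, P a * wt PB m {w | pushB B a w ∈ E} :=
            (Finset.sum_add_sum_compl B _).symm
        _ ≤ p * wt PB (m + 1) E + (1 - p) * wt PB (m + 1) E := by
            have hq : ∑ a ∈ Bᶜ, P a = 1 - p := by
              have := Finset.sum_add_sum_compl B P
              rw [h1] at this
              linarith
            refine add_le_add (le_of_eq ?_) ?_
            · -- sum over B
              rw [wt_succ (P := PB) m E, Finset.mul_sum]
              rw [← Finset.sum_attach B (fun a => P a * wt PB m {w | pushB B a w ∈ E})]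
              rw [← Finset.univ_eq_attach]
              refine Finset.sum_congr rfl fun x _ => ?_
              have hpush : {w | pushB B (↑x) w ∈ E} = {w | x :: w ∈ E} := by
                ext w
                unfold pushB
                simp only [Set.mem_setOf_eq, dif_pos x.2, Subtype.coe_eta]
              rw [hpush, hPBdef]
              have : p * (P ↑x / p * wt PB m {w | x :: w ∈ E})
                  = p / p * (P ↑x * wt PB m {w | x :: w ∈ E}) := by ring
              rw [this, div_self hp.ne', one_mul]
            · -- sum over Bᶜ
              have hEa : ∀ a ∈ Bᶜ, P a * wt PB m {w | pushB B a w ∈ E}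
                  = P a * wt PB m E := by
                intro a ha
                have hnotB : a ∉ B := Finset.mem_compl.mp ha
                have : {w | pushB B a w ∈ E} = E := by
                  ext w; unfold pushB; simp only [Set.mem_setOf_eq, dif_neg hnotB]
                rw [this]
              rw [Finset.sum_congr rfl hEa, ← Finset.sum_mul, hq]
              have h1p : (0:ℝ) ≤ 1 - p := by
                rw [← hq]; exact Finset.sum_nonneg fun a _ => h0 a
              exact mul_le_mul_of_nonneg_left
                (wt_len_mono hPB0 hPB1 m E hE) h1p
        _ = wt PB (m + 1) E := by ring
end Cond

section CompAll

variable {Ω : Type*} [Fintype Ω] [DecidableEq Ω] (B : Finset Ω) (K : ℕ)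

def dNum (n L : ℕ) : ℕ := (L - (n + 2) * K) / (K + 1)

def testD1 : Set (ℕ × List Ω) :=
  {q | q.2.length = dNum K q.1 q.2.length + (q.1 + dNum K q.1 q.2.length + 2) * K ∧
       (q.1 + dNum K q.1 q.2.length + 2) * K ≤ q.2.reverse.findIdx (fun a => decide (a ∈ B))}

lemma findIdx_map {α β : Type*} (f : α → β) (p : β → Bool) (l : List α) :
    (l.map f).findIdx p = l.findIdx (fun a => p (f a)) := by
  induction l with
  | nil => rfl
  | cons a l ih => simp [List.findIdx_cons, ih]

lemma REset_testD1 : REset (testD1 B K) := by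
  refine ⟨Fintype.equivFin Ω, ?_⟩
  set e := Fintype.equivFin Ω with he
  have hiff : ∀ q : ℕ × List (Fin (Fintype.card Ω)),
      ((q.1, q.2.map e.symm) ∈ testD1 B K) ↔
      (q.2.length = dNum K q.1 q.2.length + (q.1 + dNum K q.1 q.2.length + 2) * K ∧
       (q.1 + dNum K q.1 q.2.length + 2) * K
          ≤ q.2.reverse.findIdx (fun i => decide (e.symm i ∈ B))) := by
    intro q
    unfold testD1
    simp only [Set.mem_setOf_eq, List.length_map]
    rw [← List.map_reverse, findIdx_map]
  have hlen : Primrec fun q : ℕ × List (Fin (Fintype.card Ω)) => q.2.length :=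
    Primrec.list_length.comp Primrec.snd
  have hdN : Primrec fun q : ℕ × List (Fin (Fintype.card Ω)) => dNum K q.1 q.2.length := by
    unfold dNum
    exact Primrec.nat_div.comp
      (Primrec.nat_sub.comp hlen
        (Primrec.nat_mul.comp (Primrec.nat_add.comp Primrec.fst (Primrec.const 2))
          (Primrec.const K)))
      (Primrec.const (K + 1))
  have hM : Primrec fun q : ℕ × List (Fin (Fintype.card Ω)) =>
      (q.1 + dNum K q.1 q.2.length + 2) * K :=
    Primrec.nat_mul.comp
      (Primrec.nat_add.comp (Primrec.nat_add.comp Primrec.fst hdN) (Primrec.const 2))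
      (Primrec.const K)
  have hfind : Primrec fun q : ℕ × List (Fin (Fintype.card Ω)) =>
      q.2.reverse.findIdx (fun i => decide (e.symm i ∈ B)) :=
    Primrec.list_findIdx (Primrec.list_reverse.comp Primrec.snd)
      ((Primrec.dom_finite (fun i => decide (e.symm i ∈ B))).comp Primrec.snd).to₂
  have h1 : PrimrecPred fun q : ℕ × List (Fin (Fintype.card Ω)) =>
      q.2.length = dNum K q.1 q.2.length + (q.1 + dNum K q.1 q.2.length + 2) * K :=
    PrimrecRel.comp Primrec.eq hlen (Primrec.nat_add.comp hdN hM)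
  have h2 : PrimrecPred fun q : ℕ × List (Fin (Fintype.card Ω)) =>
      (q.1 + dNum K q.1 q.2.length + 2) * K
        ≤ q.2.reverse.findIdx (fun i => decide (e.symm i ∈ B)) :=
    PrimrecRel.comp Primrec.nat_le hM hfind
  have hcp : ComputablePred fun q : ℕ × List (Fin (Fintype.card Ω)) =>
      (q.1, q.2.map e.symm) ∈ testD1 B K := by
    refine ComputablePred.of_eq ?_ (fun q => (hiff q).symm)
    exact (h1.and h2).computablePred
  exact hcp.to_re

lemma rePred_comp {α β : Type*} [Primcodable α] [Primcodable β] {p : β → Prop}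
    (hp : REPred p) {g : α → β} (hg : Computable g) : REPred fun a => p (g a) :=
  Partrec.comp hp hg

lemma REset_pull {C : Set (ℕ × List {x : Ω // x ∈ B})} (hC : REset C) :
    REset {q : ℕ × List Ω | (q.1, filt B q.2) ∈ C} := by
  obtain ⟨eB, hre⟩ := hC
  refine ⟨Fintype.equivFin Ω, ?_⟩
  set e := Fintype.equivFin Ω with he
  set h : Fin (Fintype.card Ω) → Option (Fin (Fintype.card {x : Ω // x ∈ B})) :=
    fun i => if hm : (e.symm i) ∈ B then some (eB ⟨e.symm i, hm⟩) else none with hh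
  have key : ∀ l : List (Fin (Fintype.card Ω)),
      l.filterMap h = (filt B (l.map e.symm)).map eB := by
    intro l
    induction l with
    | nil => rfl
    | cons a l ih =>
        rw [List.filterMap_cons, List.map_cons]
        unfold filt
        rw [List.filterMap_cons]
        by_cases hm : e.symm a ∈ B
        · rw [hh]; simp only [dif_pos hm]
          rw [List.map_cons, ih]
          rfl
        · rw [hh]; simp only [dif_neg hm]
          exact ih
  set g : ℕ × List (Fin (Fintype.card Ω)) → ℕ × List (Fin (Fintype.card {x : Ω // x ∈ B})) :=
    fun q => (q.1, q.2.filterMap h) with hg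
  have hgc : Computable g := by
    have : Primrec g :=
      Primrec.pair Primrec.fst
        (Primrec.listFilterMap Primrec.snd ((Primrec.dom_finite h).comp Primrec.snd).to₂)
    exact this.to_comp
  have := rePred_comp hre hgc
  refine REPred.of_eq this ?_
  intro q
  simp only [hg, key, Set.mem_setOf_eq, List.map_map]
  rw [show ⇑eB.symm ∘ ⇑eB = id from funext fun x => eB.symm_apply_apply x, List.map_id]

lemma le_findIdx_of_all {γ : Type*} (p : γ → Bool) (xs : List γ) (M : ℕ) (hM : M ≤ xs.length)
    (h : ∀ j (hj : j < M), p (xs[j]'(lt_of_lt_of_le hj hM)) = false) : M ≤ xs.findIdx p := by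
  rcases eq_or_lt_of_le hM with heq | hlt
  · have : xs.findIdx p = xs.length := by
      refine List.findIdx_eq_length_of_false fun x hx => ?_
      obtain ⟨j, hj, rfl⟩ := List.mem_iff_getElem.mp hx
      exact h j (by omega)
    omega
  · exact List.le_findIdx_of_not hlt h

lemma dNum_spec (n N₀ : ℕ) : dNum K n (N₀ + (n + N₀ + 2) * K) = N₀ := by
  unfold dNum
  have h : N₀ + (n + N₀ + 2) * K = (n + 2) * K + N₀ * (K + 1) := by ring
  rw [h, Nat.add_sub_cancel_left, Nat.mul_div_cancel _ (Nat.succ_pos K)]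

lemma getElem_idx {γ : Type*} {l : List γ} {i j : ℕ} (h : i = j) {hi : i < l.length} :
    l[i]'hi = l[j]'(h ▸ hi) := by subst h; rfl

/-- Covering -/
lemma testD1_mem (α : ℕ → Ω) (N₀ : ℕ) (hN₀ : ∀ i, N₀ ≤ i → α i ∉ B) (n : ℕ)
    (L : ℕ) (hL : L = N₀ + (n + N₀ + 2) * K) :
    (n, seqPrefix α L) ∈ testD1 B K := by
  have hlen : (seqPrefix α L).length = L := by simp [seqPrefix]
  have hdN : dNum K n L = N₀ := by rw [hL, dNum_spec]
  constructor
  · show (seqPrefix α L).length = _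
    rw [hlen, hdN, ← hL]
  · show (n + dNum K n (seqPrefix α L).length + 2) * K ≤ _
    rw [hlen, hdN]
    refine le_findIdx_of_all _ _ _ (by rw [List.length_reverse, hlen]; omega) ?_
    intro j hj
    rw [List.getElem_reverse]
    have : (seqPrefix α L)[(seqPrefix α L).length - 1 - j]'(by omega)
        = α ((seqPrefix α L).length - 1 - j) := by simp [seqPrefix]
    rw [this]
    simp only [decide_eq_false_iff_not]
    exact hN₀ _ (by omega)

/-- Any length-`m` list extending an element of the `n`-th level of `testD1` lies in
some `Gset B N ((n+N+2)K)` with `N ≤ m`. -/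
lemma testD1_sub_G (n m : ℕ) (l : List Ω) (hm : l.length = m)
    (hl : ∃ σ ∈ {σ | (n, σ) ∈ testD1 B K}, σ <+: l) :
    ∃ N ∈ Finset.range (m + 1), l ∈ Gset B N ((n + N + 2) * K) := by
  obtain ⟨σ, hσ, hpre⟩ := hl
  have hσ' : σ.length = dNum K n σ.length + (n + dNum K n σ.length + 2) * K ∧
      (n + dNum K n σ.length + 2) * K
        ≤ σ.reverse.findIdx (fun a => decide (a ∈ B)) := hσ
  obtain ⟨hlen, hfi⟩ := hσ'
  obtain ⟨N, hNdef⟩ : ∃ N', dNum K n σ.length = N' := ⟨_, rfl⟩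
  rw [hNdef] at hlen hfi
  obtain ⟨M, hMdef⟩ : ∃ M', (n + N + 2) * K = M' := ⟨_, rfl⟩
  rw [hMdef] at hlen hfi
  have hσl : σ.length ≤ l.length := hpre.length_le
  refine ⟨N, Finset.mem_range.mpr (by omega), ?_, ?_⟩
  · show N + (n + N + 2) * K ≤ l.length
    rw [hMdef]; omega
  · show ∀ x ∈ (l.drop N).take ((n + N + 2) * K), x ∉ B
    rw [hMdef]
    intro x hx
    have hdt : (l.drop N).take M = σ.drop N := by
      obtain ⟨t, rfl⟩ := hpre
      rw [List.drop_append]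
      have h1 : N - σ.length = 0 := by omega
      rw [h1, List.drop_zero]
      exact List.take_left' (by rw [List.length_drop]; omega)
    rw [hdt] at hx
    obtain ⟨i, hi, rfl⟩ := List.mem_iff_getElem.mp hx
    have hiM : i < M := by rw [List.length_drop] at hi; omega
    have hrevlen : σ.reverse.length = σ.length := List.length_reverse
    have hj : M - 1 - i < σ.reverse.findIdx (fun a => decide (a ∈ B)) := by omega
    have hfalse := List.not_of_lt_findIdx hj
    have hidx : σ.length - 1 - (M - 1 - i) = N + i := by omega
    rw [List.getElem_reverse, getElem_idx hidx] at hfalse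
    have hgd : (σ.drop N)[i]'hi = σ[N + i]'(by omega) := by
      simp [List.getElem_drop]
    rw [hgd]
    simpa using hfalse

end CompAll

section CoverAll

variable {Ω : Type*} [Fintype Ω] [DecidableEq Ω] (B : Finset Ω) (α : ℕ → Ω) (hB : B.Nonempty)

lemma seqPrefix_succ (m : ℕ) : seqPrefix α (m + 1) = seqPrefix α m ++ [α m] := by
  unfold seqPrefix
  rw [List.ofFn_succ']
  simp [List.concat_eq_append]

lemma seqPrefix_length (m : ℕ) : (seqPrefix α m).length = m := by simp [seqPrefix]

lemma filt_seqPrefix (m : ℕ) :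
    filt B (seqPrefix α m)
      = List.ofFn (fun j : Fin (Nat.count (fun i => α i ∈ B) m) => condSeq α B hB j) := by
  induction m with
  | zero => simp [seqPrefix, filt]
  | succ m ih =>
      rw [seqPrefix_succ, filt_append, ih]
      by_cases h : α m ∈ B
      · rw [Nat.count_succ, if_pos h]
        have hfilt : filt B [α m] = [⟨α m, h⟩] := by
          unfold filt
          rw [List.filterMap_cons, dif_pos h]
          rfl
        rw [hfilt, List.ofFn_succ']
        simp only [List.concat_eq_append, Fin.coe_castSucc, Fin.val_last]
        congr 1
        unfold condSeq
        rw [Nat.nth_count (p := fun i => α i ∈ B) h]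
        rw [dif_pos h]
      · rw [Nat.count_succ, if_neg h]
        have hfilt : filt B [α m] = [] := by
          unfold filt
          rw [List.filterMap_cons, dif_neg h]
          rfl
        rw [hfilt, List.append_nil]
        simp

lemma filt_seqPrefix_nth (hinf : {n | α n ∈ B}.Infinite) (t : ℕ) :
    filt B (seqPrefix α (Nat.nth (fun m => α m ∈ B) t))
      = seqPrefix (condSeq α B hB) t := by
  rw [filt_seqPrefix B α hB]
  have hc : Nat.count (fun i => α i ∈ B) (Nat.nth (fun m => α m ∈ B) t) = t :=
    Nat.count_nth_of_infinite hinf t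
  unfold seqPrefix
  simp only [hc]
  simp [Fin.coe_cast]

lemma filt_prefix (σ l : List Ω) (h : σ <+: l) : filt B σ <+: filt B l := by
  obtain ⟨t, rfl⟩ := h
  rw [filt_append]
  exact ⟨_, rfl⟩

end CoverAll

/-- closure under conditioning. If `P(B) > 0` and `α` is Martin-Löf
`P`-random, then `α` contains infinitely many elements of `B` (so `α|B` is well defined),
and `α|B` is Martin-Löf `P_B`-random, where `P_B(a) = P(a)/P(B)` for `a ∈ B`. -/
theorem closure_under_conditioning {Ω : Type*} [Fintype Ω] [Nonempty Ω] [DecidableEq Ω]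
    (P : Ω → ℝ) (hP : IsFPS P) (B : Finset Ω) (hBpos : 0 < ∑ a ∈ B, P a)
    (α : ℕ → Ω) (hα : MLRandom P α) :
    {n : ℕ | α n ∈ B}.Infinite ∧
      ∀ hB : B.Nonempty,
        MLRandom (fun b : {x : Ω // x ∈ B} => P (b : Ω) / ∑ a ∈ B, P a)
          (condSeq α B hB) := by
  obtain ⟨h0, h1⟩ := hP
  have hqsum : ∑ a ∈ Bᶜ, P a = 1 - ∑ a ∈ B, P a := by
    have := Finset.sum_add_sum_compl B P
    rw [h1] at this
    linarith
  have hq0 : (0:ℝ) ≤ ∑ a ∈ Bᶜ, P a := Finset.sum_nonneg fun a _ => h0 a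
  have hq1 : (∑ a ∈ Bᶜ, P a) < 1 := by rw [hqsum]; linarith
  obtain ⟨K, hK⟩ := exists_pow_lt_of_lt_one (show (0:ℝ) < 1/2 by norm_num) hq1
  -- the test witnessing that α has infinitely many B-positions
  have hmeas : ∀ n : ℕ, 0 < n →
      cylMeasure P {σ | (n, σ) ∈ testD1 B K} < (2:ℝ)⁻¹ ^ n := by
    intro n hn
    have hchain : ∀ m, wt P m {l | ∃ σ ∈ {σ : List Ω | (n, σ) ∈ testD1 B K}, σ <+: l}
        ≤ (1/2:ℝ) ^ (n + 1) := by
      intro m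
      calc wt P m {l | ∃ σ ∈ {σ : List Ω | (n, σ) ∈ testD1 B K}, σ <+: l}
          ≤ wt P m {l | ∃ N ∈ Finset.range (m + 1), l ∈ Gset B N ((n + N + 2) * K)} :=
            wt_mono h0 m (fun l hlm hl => testD1_sub_G B K n m l hlm hl)
        _ ≤ ∑ N ∈ Finset.range (m + 1), wt P m (Gset B N ((n + N + 2) * K)) :=
            wt_biUnion h0 m (m + 1) _
        _ ≤ ∑ N ∈ Finset.range (m + 1), (1/2:ℝ) ^ (n + N + 2) := by
            refine Finset.sum_le_sum fun N _ => ?_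
            refine (wt_Gset_le h0 h1 m N ((n + N + 2) * K)).trans ?_
            have heq : (∑ a ∈ Bᶜ, P a) ^ ((n + N + 2) * K)
                = ((∑ a ∈ Bᶜ, P a) ^ K) ^ (n + N + 2) := by
              rw [← pow_mul, mul_comm]
            rw [heq]
            exact pow_le_pow_left₀ (pow_nonneg hq0 K) hK.le (n + N + 2)
        _ = (1/2:ℝ) ^ (n + 2) * ∑ N ∈ Finset.range (m + 1), (1/2:ℝ) ^ N := by
            rw [Finset.mul_sum]
            refine Finset.sum_congr rfl fun N _ => ?_
            rw [← pow_add]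
            congr 1
            omega
        _ ≤ (1/2:ℝ) ^ (n + 2) * 2 := by
            refine mul_le_mul_of_nonneg_left (sum_geometric_two_le _) (by positivity)
        _ = (1/2:ℝ) ^ (n + 1) := by
            rw [pow_succ]
            ring
    refine lt_of_le_of_lt (cylMeasure_le hchain) ?_
    have h2 : (1/2:ℝ) = 2⁻¹ := by norm_num
    rw [h2, pow_succ]
    have hpos : (0:ℝ) < (2:ℝ)⁻¹ ^ n := by positivity
    nlinarith
  have hMLD1 : MLTest P (testD1 B K) := ⟨REset_testD1 B K, hmeas⟩
  have hinf : {n : ℕ | α n ∈ B}.Infinite := by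
    by_contra hfin
    rw [Set.not_infinite] at hfin
    obtain ⟨N', hN'⟩ := hfin.bddAbove
    have hN₀ : ∀ i, N' + 1 ≤ i → α i ∉ B := by
      intro i hi hmem
      have := hN' (Set.mem_setOf_eq ▸ hmem)
      omega
    obtain ⟨n, hn, hno⟩ := hα _ hMLD1
    refine hno ⟨seqPrefix α ((N' + 1) + (n + (N' + 1) + 2) * K),
      testD1_mem B K α (N' + 1) hN₀ n _ rfl, ?_⟩
    rw [seqPrefix_length]
  refine ⟨hinf, ?_⟩
  intro hB C hC
  obtain ⟨hCre, hCmeas⟩ := hC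
  obtain ⟨hPB0, hPB1⟩ := PB_fps (B := B) h0 hBpos
  have hDmeas : ∀ n : ℕ, 0 < n →
      cylMeasure P {σ | (n, σ) ∈ {q : ℕ × List Ω | (q.1, filt B q.2) ∈ C}}
        < (2:ℝ)⁻¹ ^ n := by
    intro n hn
    refine lt_of_le_of_lt ?_ (hCmeas n hn)
    refine cylMeasure_le fun m => ?_
    have hup : UpClosed {w : List {x : Ω // x ∈ B} |
        ∃ τ ∈ {τ : List {x : Ω // x ∈ B} | (n, τ) ∈ C}, τ <+: w} := by
      rintro w ⟨τ, hτ, hpre⟩ b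
      exact ⟨τ, hτ, hpre.trans ⟨[b], rfl⟩⟩
    calc wt P m {l | ∃ σ ∈ {σ : List Ω | (n, σ) ∈ {q : ℕ × List Ω | (q.1, filt B q.2) ∈ C}},
            σ <+: l}
        ≤ wt P m {l | filt B l ∈ {w | ∃ τ ∈ {τ : List {x : Ω // x ∈ B} | (n, τ) ∈ C},
            τ <+: w}} := by
          refine wt_mono h0 m fun l _ hl => ?_
          obtain ⟨σ, hσ, hpre⟩ := hl
          exact ⟨filt B σ, hσ, filt_prefix B σ l hpre⟩
      _ ≤ wt (fun b : {x : Ω // x ∈ B} => P ↑b / ∑ a ∈ B, P a) m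
            {w | ∃ τ ∈ {τ : List {x : Ω // x ∈ B} | (n, τ) ∈ C}, τ <+: w} :=
          wt_filt_le B h0 h1 hBpos m _ hup
      _ ≤ cylMeasure (fun b : {x : Ω // x ∈ B} => P ↑b / ∑ a ∈ B, P a)
            {τ | (n, τ) ∈ C} :=
          wt_le_cylMeasure hPB0 hPB1 m _
  have hDtest : MLTest P {q : ℕ × List Ω | (q.1, filt B q.2) ∈ C} :=
    ⟨REset_pull B hCre, hDmeas⟩
  obtain ⟨n, hn, hno⟩ := hα _ hDtest
  refine ⟨n, hn, fun hopen => hno ?_⟩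
  obtain ⟨τ, hτ, hpre⟩ := hopen
  refine ⟨seqPrefix α (Nat.nth (fun m => α m ∈ B) τ.length), ?_, ?_⟩
  · show (n, filt B (seqPrefix α (Nat.nth (fun m => α m ∈ B) τ.length))) ∈ C
    rw [filt_seqPrefix_nth B α hB hinf τ.length, hpre]
    exact hτ
  · rw [seqPrefix_length]

end Paper
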